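/- Let H1, H2, H3, H4 be subgroups of a finite group G with H1 cyclic. Then the Ingleton inequality |H1| · |H2| · |H3 ∩ H4| · |H1 ∩ H2 ∩ H3| · |H1 ∩ H2 ∩ H4| ≥ |H1 ∩ H2| · |H1 ∩ H3| · |H1 ∩ H4| · |H2 ∩ H3| · |H2 ∩ H4| holds; that is, a quadruple with H1 cyclic is never an Ingleton offender. -/

import Mathlib

open Subgroup

section Aux

variable {G : Type*} [Group G] [Finite G]

/-- card of `subgroupOf` for `K ≤ H`. -/
lemma card_subgroupOf_aux {K H : Subgroup G} (h : K ≤ H) :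
    Nat.card (K.subgroupOf H) = Nat.card K :=
  Nat.card_congr (subgroupOfEquivOfLe h).toEquiv

lemma card_subgroupOf_aux' (K H : Subgroup G) :
    Nat.card (K.subgroupOf H) = Nat.card (K ⊓ H : Subgroup G) := by
  rw [← inf_subgroupOf_right, card_subgroupOf_aux inf_le_right]

/-- Product bound: if `A, B ≤ L` then `|A| * |B| ≤ |L| * |A ⊓ B|`. -/
lemma card_mul_card_le {A B L : Subgroup G} (hA : A ≤ L) (hB : B ≤ L) :
    Nat.card A * Nat.card B ≤ Nat.card L * Nat.card (A ⊓ B : Subgroup G) := by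
  have h1 : Nat.card (A ⊓ B : Subgroup G) * B.relIndex A = Nat.card A := by
    have := Subgroup.card_mul_index (B.subgroupOf A)
    rwa [card_subgroupOf_aux' B A, inf_comm] at this
  have h2 : Nat.card B * B.relIndex L = Nat.card L := by
    have := Subgroup.card_mul_index (B.subgroupOf L)
    rwa [card_subgroupOf_aux hB] at this
  have hL : 0 < Nat.card L := Nat.card_pos
  have hne : B.relIndex L ≠ 0 := by
    intro h
    rw [h, mul_zero] at h2
    omega
  have h3 : B.relIndex A ≤ B.relIndex L := Subgroup.relIndex_le_of_le_right hA hne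
  calc Nat.card A * Nat.card B
      = Nat.card (A ⊓ B : Subgroup G) * Nat.card B * B.relIndex A := by
        rw [mul_comm (Nat.card (A ⊓ B : Subgroup G)) (Nat.card B), mul_assoc, h1, mul_comm]
    _ ≤ Nat.card (A ⊓ B : Subgroup G) * Nat.card B * B.relIndex L :=
        Nat.mul_le_mul_left _ h3
    _ = Nat.card L * Nat.card (A ⊓ B : Subgroup G) := by
        rw [mul_assoc, h2, mul_comm]

/-- In a finite cyclic group, membership follows from killing by the subgroup order. -/
lemma mem_of_pow_card_cyclic {C : Type*} [Group C] [Finite C] (hc : IsCyclic C)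
    (Y : Subgroup C) {t : C} (ht : t ^ Nat.card Y = 1) : t ∈ Y := by
  classical
  haveI := hc
  haveI : Fintype C := Fintype.ofFinite C
  set b := Nat.card Y with hb
  have hb0 : 0 < b := Nat.card_pos
  set s : Finset C := (Y : Set C).toFinset with hs
  set u : Finset C := Finset.univ.filter (fun x => x ^ b = 1) with hu
  have hsu : s ⊆ u := by
    intro y hy
    rw [hs, Set.mem_toFinset] at hy
    rw [hu, Finset.mem_filter]
    refine ⟨Finset.mem_univ _, ?_⟩
    have : (⟨y, hy⟩ : Y) ^ b = 1 := pow_card_eq_one'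
    have := congrArg (Subtype.val) this
    simpa using this
  have hcard : u.card ≤ b := IsCyclic.card_pow_eq_one_le hb0
  have hscard : s.card = b := by
    rw [hs, Set.toFinset_card, hb, Nat.card_eq_fintype_card]
    rfl
  have : s = u := Finset.eq_of_subset_of_card_le hsu (by omega)
  have htu : t ∈ u := by
    rw [hu, Finset.mem_filter]
    exact ⟨Finset.mem_univ _, ht⟩
  rw [← this, hs, Set.mem_toFinset] at htu
  exact htu

/-- In a finite cyclic group, `|X ⊓ Y| = gcd |X| |Y|`. -/
lemma card_inf_cyclic {C : Type*} [Group C] [Finite C] (hc : IsCyclic C)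
    (X Y : Subgroup C) :
    Nat.card (X ⊓ Y : Subgroup C) = Nat.gcd (Nat.card X) (Nat.card Y) := by
  haveI := hc
  set a := Nat.card X with ha
  set b := Nat.card Y with hb
  have ha0 : 0 < a := Nat.card_pos
  have hb0 : 0 < b := Nat.card_pos
  set g := Nat.gcd a b with hg
  have hga : g ∣ a := Nat.gcd_dvd_left a b
  have hg0 : 0 < g := Nat.gcd_pos_of_pos_left _ ha0
  apply Nat.dvd_antisymm
  · exact Nat.dvd_gcd (Subgroup.card_dvd_of_le inf_le_left)
      (Subgroup.card_dvd_of_le inf_le_right)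
  · -- find an element of order g in X ⊓ Y
    obtain ⟨x, hx⟩ := IsCyclic.exists_ofOrder_eq_natCard (α := X)
    have hxo : orderOf (x : C) = a := by rw [Subgroup.orderOf_coe, hx]
    set t : C := (x : C) ^ (a / g) with htdef
    have hdvd : a / g ∣ a := Nat.div_dvd_of_dvd hga
    have hto : orderOf t = g := by
      rw [htdef, orderOf_pow, hxo, Nat.gcd_eq_right hdvd,
        Nat.div_div_self hga (by omega)]
    have htX : t ∈ X := by
      rw [htdef]
      exact pow_mem x.2 _
    have htY : t ∈ Y := by
      apply mem_of_pow_card_cyclic hc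
      rw [← hb]
      rw [← orderOf_dvd_iff_pow_eq_one, hto]
      exact Nat.gcd_dvd_right a b
    have hle : Subgroup.zpowers t ≤ X ⊓ Y := by
      rw [Subgroup.zpowers_le]
      exact ⟨htX, htY⟩
    have := Subgroup.card_dvd_of_le hle
    rwa [Nat.card_zpowers, hto] at this

/-- Arithmetic identity: `lcm(a,b,c) * gcd(a,b) * gcd(a,c) * gcd(b,c) = a*b*c*gcd(a,b,c)`. -/
lemma lcm_gcd_identity {a b c : ℕ} (ha : a ≠ 0) (hb : b ≠ 0) (hc : c ≠ 0) :
    Nat.lcm a (Nat.lcm b c) * (Nat.gcd a b * Nat.gcd a c * Nat.gcd b c) =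
      a * b * c * Nat.gcd a (Nat.gcd b c) := by
  have hbc : Nat.lcm b c ≠ 0 := Nat.lcm_ne_zero hb hc
  have hgbc : Nat.gcd b c ≠ 0 := Nat.gcd_ne_zero_left hb
  have hL : Nat.lcm a (Nat.lcm b c) ≠ 0 := Nat.lcm_ne_zero ha hbc
  have hgab : Nat.gcd a b ≠ 0 := Nat.gcd_ne_zero_left ha
  have hgac : Nat.gcd a c ≠ 0 := Nat.gcd_ne_zero_left ha
  have hgabc : Nat.gcd a (Nat.gcd b c) ≠ 0 := Nat.gcd_ne_zero_left ha
  have h1 : Nat.lcm a (Nat.lcm b c) * (Nat.gcd a b * Nat.gcd a c * Nat.gcd b c) ≠ 0 := by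
    positivity
  have h2 : a * b * c * Nat.gcd a (Nat.gcd b c) ≠ 0 := by positivity
  apply Nat.factorization_inj h1 h2
  rw [Nat.factorization_mul hL (by positivity), Nat.factorization_mul (by positivity) hgbc,
    Nat.factorization_mul hgab hgac, Nat.factorization_mul (by positivity) hgabc,
    Nat.factorization_mul (by positivity) hc, Nat.factorization_mul ha hb,
    Nat.factorization_lcm ha hbc, Nat.factorization_lcm hb hc,
    Nat.factorization_gcd ha hb, Nat.factorization_gcd ha hc, Nat.factorization_gcd hb hc,
    Nat.factorization_gcd ha hgbc, Nat.factorization_gcd hb hc]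
  ext p
  simp only [Finsupp.add_apply, Finsupp.sup_apply, Finsupp.inf_apply]
  omega

end Aux

theorem stmt7 {G : Type*} [Group G] [Finite G] (H1 H2 H3 H4 : Subgroup G)
    (hc : IsCyclic H1) :
    Nat.card (H1 : Subgroup G) * Nat.card (H2 : Subgroup G) * Nat.card (H3 ⊓ H4 : Subgroup G) * Nat.card (H1 ⊓ H2 ⊓ H3 : Subgroup G) * Nat.card (H1 ⊓ H2 ⊓ H4 : Subgroup G) ≥ Nat.card (H1 ⊓ H2 : Subgroup G) * Nat.card (H1 ⊓ H3 : Subgroup G) * Nat.card (H1 ⊓ H4 : Subgroup G) * Nat.card (H2 ⊓ H3 : Subgroup G) * Nat.card (H2 ⊓ H4 : Subgroup G) := by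
  -- notation
  set n := Nat.card H1
  set h2 := Nat.card H2
  set h34 := Nat.card (H3 ⊓ H4 : Subgroup G)
  set a := Nat.card (H1 ⊓ H2 : Subgroup G)
  set b := Nat.card (H1 ⊓ H3 : Subgroup G)
  set c := Nat.card (H1 ⊓ H4 : Subgroup G)
  set h23 := Nat.card (H2 ⊓ H3 : Subgroup G)
  set h24 := Nat.card (H2 ⊓ H4 : Subgroup G)
  set h123 := Nat.card (H1 ⊓ H2 ⊓ H3 : Subgroup G)
  set h124 := Nat.card (H1 ⊓ H2 ⊓ H4 : Subgroup G)
  set h234 := Nat.card ((H2 ⊓ H3) ⊓ (H2 ⊓ H4) : Subgroup G) with hh234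
  set h134 := Nat.card ((H1 ⊓ H3) ⊓ (H1 ⊓ H4) : Subgroup G) with hh134
  set h1234 := Nat.card (((H1 ⊓ H3) ⊓ (H1 ⊓ H4)) ⊓ ((H2 ⊓ H3) ⊓ (H2 ⊓ H4)) : Subgroup G)
    with hh1234
  -- cyclic computations inside H1: card of intersections of subgroups of H1
  have key_cyc : ∀ K L : Subgroup G, K ≤ H1 → L ≤ H1 →
      Nat.card (K ⊓ L : Subgroup G) = Nat.gcd (Nat.card K) (Nat.card L) := by
    intro K L hK hL
    have h1 : (K ⊓ L).subgroupOf H1 = K.subgroupOf H1 ⊓ L.subgroupOf H1 := by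
      ext x
      simp [Subgroup.mem_subgroupOf, Subgroup.mem_inf]
    have := card_inf_cyclic hc (K.subgroupOf H1) (L.subgroupOf H1)
    rw [← h1, card_subgroupOf_aux (le_trans inf_le_left hK),
      card_subgroupOf_aux hK, card_subgroupOf_aux hL] at this
    exact this
  -- identify h123, h124, h134 as gcds
  have e123 : h123 = Nat.gcd a b := by
    have h : (H1 ⊓ H2 ⊓ H3 : Subgroup G) = (H1 ⊓ H2) ⊓ (H1 ⊓ H3) := by
      ext x; simp [Subgroup.mem_inf]; tauto
    rw [show h123 = Nat.card (H1 ⊓ H2 ⊓ H3 : Subgroup G) from rfl, h]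
    exact key_cyc _ _ inf_le_left inf_le_left
  have e124 : h124 = Nat.gcd a c := by
    have h : (H1 ⊓ H2 ⊓ H4 : Subgroup G) = (H1 ⊓ H2) ⊓ (H1 ⊓ H4) := by
      ext x; simp [Subgroup.mem_inf]; tauto
    rw [show h124 = Nat.card (H1 ⊓ H2 ⊓ H4 : Subgroup G) from rfl, h]
    exact key_cyc _ _ inf_le_left inf_le_left
  have e134 : h134 = Nat.gcd b c := key_cyc _ _ inf_le_left inf_le_left
  -- product bounds
  have e1 : h23 * h24 ≤ h2 * h234 :=
    card_mul_card_le inf_le_left inf_le_left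
  have e2 : h134 * h234 ≤ h34 * h1234 := by
    apply card_mul_card_le
    · exact le_inf (le_trans inf_le_left inf_le_right) (le_trans inf_le_right inf_le_right)
    · exact le_inf (le_trans inf_le_left inf_le_right) (le_trans inf_le_right inf_le_right)
  -- h1234 divides gcd(a, gcd(b,c))
  have e4 : h1234 ≤ Nat.gcd a (Nat.gcd b c) := by
    have d1 : h1234 ∣ a := Subgroup.card_dvd_of_le (by
      intro x hx; simp only [Subgroup.mem_inf] at hx ⊢; tauto)
    have d2 : h1234 ∣ b := Subgroup.card_dvd_of_le (by
      intro x hx; simp only [Subgroup.mem_inf] at hx ⊢; tauto)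
    have d3 : h1234 ∣ c := Subgroup.card_dvd_of_le (by
      intro x hx; simp only [Subgroup.mem_inf] at hx ⊢; tauto)
    have hp : 0 < Nat.gcd a (Nat.gcd b c) :=
      Nat.gcd_pos_of_pos_left _ Nat.card_pos
    exact Nat.le_of_dvd hp (Nat.dvd_gcd d1 (Nat.dvd_gcd d2 d3))
  -- lcm(a,b,c) ≤ n
  have e5 : Nat.lcm a (Nat.lcm b c) ≤ n := by
    have d1 : a ∣ n := Subgroup.card_dvd_of_le inf_le_left
    have d2 : b ∣ n := Subgroup.card_dvd_of_le inf_le_left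
    have d3 : c ∣ n := Subgroup.card_dvd_of_le inf_le_left
    exact Nat.le_of_dvd Nat.card_pos (Nat.lcm_dvd d1 (Nat.lcm_dvd d2 d3))
  -- positivity
  have pa : 0 < a := Nat.card_pos
  have pb : 0 < b := Nat.card_pos
  have pc : 0 < c := Nat.card_pos
  have p234 : 0 < h234 := Nat.card_pos
  have p1234 : 0 < h1234 := Nat.card_pos
  have p23 : 0 < h23 := Nat.card_pos
  have p24 : 0 < h24 := Nat.card_pos
  -- the key arithmetic step: a*b*c*h1234 ≤ n * (h123 * h124 * h134)
  have e3 : a * b * c * h1234 ≤ n * (h123 * h124 * h134) := by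
    rw [e123, e124, e134]
    calc a * b * c * h1234 ≤ a * b * c * Nat.gcd a (Nat.gcd b c) := by
          exact Nat.mul_le_mul_left _ e4
      _ = Nat.lcm a (Nat.lcm b c) * (Nat.gcd a b * Nat.gcd a c * Nat.gcd b c) :=
          (lcm_gcd_identity (by omega) (by omega) (by omega)).symm
      _ ≤ n * (Nat.gcd a b * (Nat.gcd a c * Nat.gcd b c)) := by
          rw [← mul_assoc (Nat.gcd a b)]
          exact Nat.mul_le_mul_right _ e5
      _ = n * (Nat.gcd a b * Nat.gcd a c * Nat.gcd b c) := by ring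
  -- assemble
  have key : a * b * c * h23 * h24 * (h234 * h1234) ≤
      n * h2 * h34 * h123 * h124 * (h234 * h1234) := by
    calc a * b * c * h23 * h24 * (h234 * h1234)
        = (a * b * c * h1234) * (h23 * h24) * h234 := by ring
      _ ≤ (n * (h123 * h124 * h134)) * (h2 * h234) * h234 :=
          Nat.mul_le_mul (Nat.mul_le_mul e3 e1) le_rfl
      _ = (n * h2 * h123 * h124 * h234) * (h134 * h234) := by ring
      _ ≤ (n * h2 * h123 * h124 * h234) * (h34 * h1234) :=
          Nat.mul_le_mul_left _ e2
      _ = n * h2 * h34 * h123 * h124 * (h234 * h1234) := by ring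
  have hpos : 0 < h234 * h1234 := Nat.mul_pos p234 p1234
  exact Nat.le_of_mul_le_mul_right key hpos
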